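/- Let F be a field, let A be a β×α matrix and B a β×γ matrix over F, partitioned as Aᵀ = [A_0ᵀ … A_{p−1}ᵀ] and B = [B_0; …; B_{p−1}] with conformal blocks. Then Aᵀ·B = Σ_{l=0}^{p−1} A_lᵀ·B_l. Moreover, for any x ∈ F, Aᵀ·B equals the coefficient of x^{p−1} in the polynomial (Σ_{l=0}^{p−1} x^l A_lᵀ)·(Σ_{l=0}^{p−1} x^{p−1−l} B_l), viewed as a matrix polynomial in x. -/
import Mathlib


open Polynomial Matrix

/-- MatDot correctness: with block partitions Aᵀ = [A_0ᵀ … A_{p−1}ᵀ] and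
B = [B_0; …; B_{p−1}], we have AᵀB = Σ A_lᵀ B_l, and AᵀB is the coefficient of
x^(p−1) in (Σ x^l A_lᵀ)(Σ x^(p−1−l) B_l). -/
theorem matdot_matrix_correctness (F : Type*) [Field F] (p b α γ : ℕ) (hp : 0 < p)
    (A : Fin p → Matrix (Fin b) (Fin α) F) (B : Fin p → Matrix (Fin b) (Fin γ) F) :
    (Matrix.of (fun (i : Fin p × Fin b) (j : Fin α) => A i.1 i.2 j))ᵀ *
        (Matrix.of (fun (i : Fin p × Fin b) (j : Fin γ) => B i.1 i.2 j))
      = ∑ l, (A l)ᵀ * B l ∧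
    ((∑ l, ((A l)ᵀ).map (fun a => (C a) * (X : F[X]) ^ (l : ℕ))) *
        (∑ l, (B l).map (fun b' => (C b') * (X : F[X]) ^ (p - 1 - (l : ℕ))))).map
          (fun q => q.coeff (p - 1))
      = (Matrix.of (fun (i : Fin p × Fin b) (j : Fin α) => A i.1 i.2 j))ᵀ *
          (Matrix.of (fun (i : Fin p × Fin b) (j : Fin γ) => B i.1 i.2 j)) := by
  have h1 : (Matrix.of (fun (i : Fin p × Fin b) (j : Fin α) => A i.1 i.2 j))ᵀ *
        (Matrix.of (fun (i : Fin p × Fin b) (j : Fin γ) => B i.1 i.2 j))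
      = ∑ l, (A l)ᵀ * B l := by
    ext i j
    simp [Matrix.mul_apply, Matrix.sum_apply, Fintype.sum_prod_type, Matrix.transpose_apply]
  refine ⟨h1, ?_⟩
  rw [h1]
  ext i j
  simp only [Matrix.map_apply, Matrix.mul_apply, Matrix.sum_apply,
    Matrix.transpose_apply, Finset.sum_mul, Finset.mul_sum, finset_sum_coeff]
  have key : ∀ k : Fin b, ∀ m : Fin p, ∑ l : Fin p,
      ((C (A l k i) * X ^ (l:ℕ)) * (C (B m k j) * X ^ (p - 1 - (m:ℕ)))).coeff (p-1)
      = A m k i * B m k j := by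
    intro k m
    rw [Finset.sum_eq_single m]
    · rw [mul_mul_mul_comm, ← pow_add, ← C_mul, coeff_C_mul, coeff_X_pow]
      have : (m:ℕ) + (p - 1 - (m:ℕ)) = p - 1 := by
        have := m.2; omega
      simp [this]
    · intro l _ hl
      rw [mul_mul_mul_comm, ← pow_add, ← C_mul, coeff_C_mul, coeff_X_pow]
      have : ¬ ((l:ℕ) + (p - 1 - (m:ℕ)) = p - 1) := by
        have h1 := l.2
        have h2 := m.2
        intro h
        exact hl (Fin.ext (by omega))
      rw [if_neg fun h : p - 1 = _ => this h.symm, mul_zero]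
    · simp
  conv_rhs => rw [Finset.sum_comm]
  exact Finset.sum_congr rfl fun k _ => Finset.sum_congr rfl fun m _ => key k m
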